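/- Let a and d be positive integers, let k ≥ 2, and let S = {a, a + d, a + 2d, …, a + (k−1)d} be an arithmetic progression of k distinct positive integers. Then CM(S) ≤ 2 + ⌊log₂(k − 1)⌋. -/

import Mathlib

/-- The Cookie Monster number of a finite set `S` of jar contents: the least `n`
for which there exist positive move amounts `a_1, …, a_n` such that every `s ∈ S`
is the sum of a subset of the move amounts. -/
noncomputable def CM (S : Finset ℕ) : ℕ :=
  sInf {n : ℕ | ∃ a : Fin n → ℕ, (∀ i, 0 < a i) ∧
    ∀ s ∈ S, ∃ I : Finset (Fin n), ∑ i ∈ I, a i = s}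

/-- For an arithmetic progression `{a, a + d, …, a + (k−1)d}` of `k ≥ 2` distinct
positive integers, `CM(S) ≤ 2 + ⌊log₂ (k − 1)⌋`. -/
theorem cm_arith_progression (a d k : ℕ) (ha : 0 < a) (hd : 0 < d) (hk : 2 ≤ k) :
    CM ((Finset.range k).image (fun i => a + i * d)) ≤ 2 + Nat.log 2 (k - 1) := by
  set n := 2 + Nat.log 2 (k - 1) with hn
  apply Nat.sInf_le
  refine ⟨fun m => if m.val = 0 then a else d * 2 ^ (m.val - 1), fun m => ?_, ?_⟩
  · dsimp only
    split
    · exact ha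
    · positivity
  · intro s hs
    simp only [Finset.mem_image, Finset.mem_range] at hs
    obtain ⟨i, hi, rfl⟩ := hs
    -- bits of i
    have hjlt : ∀ j ∈ i.bitIndices, j + 1 < n := by
      intro j hj
      have h1 : 2 ^ j ≤ i := Nat.two_pow_le_of_mem_bitIndices hj
      have h2 : i ≤ k - 1 := by omega
      have : j ≤ Nat.log 2 (k - 1) :=
        (Nat.le_log_iff_pow_le (by norm_num) (by omega)).mpr (h1.trans h2)
      omega
    classical
    set φ : ℕ → Fin n := fun j => if h : j + 1 < n then ⟨j + 1, h⟩ else ⟨0, by omega⟩ with hφ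
    set T : Finset ℕ := i.bitIndices.toFinset with hT
    have hinj : Set.InjOn φ T := by
      intro x hx y hy hxy
      simp only [hT, Finset.mem_coe, List.mem_toFinset] at hx hy
      simp only [hφ, dif_pos (hjlt _ hx), dif_pos (hjlt _ hy), Fin.mk.injEq] at hxy
      omega
    refine ⟨insert ⟨0, by omega⟩ (T.image φ), ?_⟩
    have h0 : (⟨0, by omega⟩ : Fin n) ∉ T.image φ := by
      simp only [Finset.mem_image, not_exists, not_and]
      intro j hj h
      rw [hT, List.mem_toFinset] at hj
      simp only [hφ, dif_pos (hjlt _ hj), Fin.mk.injEq] at h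
      omega
    rw [Finset.sum_insert h0, Finset.sum_image (fun x hx y hy => hinj hx hy)]
    have hsum : ∑ j ∈ T, (fun m : Fin n => if m.val = 0 then a else d * 2 ^ (m.val - 1)) (φ j)
        = d * i := by
      have : ∀ j ∈ T, (fun m : Fin n => if m.val = 0 then a else d * 2 ^ (m.val - 1)) (φ j)
          = d * 2 ^ j := by
        intro j hj
        rw [hT, List.mem_toFinset] at hj
        simp only [hφ, dif_pos (hjlt _ hj)]
        rw [if_neg (by omega)]
        norm_num
      rw [Finset.sum_congr rfl this, ← Finset.mul_sum]
      congr 1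
      rw [hT, List.sum_toFinset _ Nat.bitIndices_sorted.nodup, Nat.twoPowSum_bitIndices]
    rw [hsum]
    simp [mul_comm]
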